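/- Let λ be the hyperbolic measure dλ = dx dy/y² on the upper half-plane. For m ≥ 0 and t ∈ [0,1], define C_m(t) = {(x,y) : y > max(2|x−t|, 2^{−m}), |x−t| < 1/2}. Then for all t, s ∈ [0,1]: λ(C_m(t) ∩ C_m(s)) = m log 2 + 1 − 2^m|t−s| if |t−s| < 2^{−m}, and λ(C_m(t) ∩ C_m(s)) = log(1/|t−s|) if 2^{−m} ≤ |t−s| ≤ 1. -/

import Mathlib

open MeasureTheory

/-- The hyperbolic measure dλ = dx dy / y² on ℝ × ℝ. -/
noncomputable def hypMeasure : Measure (ℝ × ℝ) :=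
  volume.withDensity (fun p => ENNReal.ofReal (1 / p.2 ^ 2))

/-- The truncated cone region `C_m(t)` of the Bacry–Muzy decomposition. -/
def coneSet (m : ℕ) (t : ℝ) : Set (ℝ × ℝ) :=
  {p : ℝ × ℝ | max (2 * |p.1 - t|) ((2 : ℝ) ^ (-(m : ℤ))) < p.2 ∧ |p.1 - t| < 1 / 2}

open Set Real intervalIntegral

section Aux

lemma lintegral_Ioi_inv_sq {a : ℝ} (ha : 0 < a) :
    ∫⁻ y in Set.Ioi a, ENNReal.ofReal (1 / y ^ 2) = ENNReal.ofReal (1 / a) := by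
  have hint : IntegrableOn (fun y : ℝ => 1 / y ^ 2) (Ioi a) := by
    have := integrableOn_Ioi_rpow_of_lt (a := (-2 : ℝ)) (by norm_num) ha
    refine this.congr_fun (fun x hx => ?_) measurableSet_Ioi
    have hx0 : (0:ℝ) < x := ha.trans hx
    dsimp only
    rw [Real.rpow_neg hx0.le, Real.rpow_two]
    simp [one_div]
  have hval : ∫ y in Ioi a, 1 / y ^ 2 = 1 / a := by
    have := integral_Ioi_rpow_of_lt (a := (-2 : ℝ)) (by norm_num) ha
    rw [show ∫ y in Ioi a, 1 / y ^ 2 = ∫ y in Ioi a, y ^ (-2 : ℝ) from ?_, this]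
    · norm_num
      rw [Real.rpow_neg_one]
    · refine setIntegral_congr_fun measurableSet_Ioi (fun x hx => ?_)
      have hx0 : (0:ℝ) < x := ha.trans hx
      rw [Real.rpow_neg hx0.le, Real.rpow_two]
      simp [one_div]
  rw [← hval]
  exact (ofReal_integral_eq_lintegral_ofReal hint
    (Filter.Eventually.of_forall fun y => by positivity)).symm

lemma hyp_slab {S : Set ℝ} (hS : MeasurableSet S) {g : ℝ → ℝ} (hg : Measurable g)
    (hgpos : ∀ x, 0 < g x) :
    hypMeasure {p : ℝ × ℝ | p.1 ∈ S ∧ g p.1 < p.2} =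
      ∫⁻ x in S, ENNReal.ofReal (1 / g x) := by
  have hA : MeasurableSet {p : ℝ × ℝ | p.1 ∈ S ∧ g p.1 < p.2} :=
    (hS.preimage measurable_fst).inter
      (measurableSet_lt (hg.comp measurable_fst) measurable_snd)
  rw [hypMeasure, withDensity_apply _ hA, ← lintegral_indicator hA,
    Measure.volume_eq_prod, lintegral_prod]
  · have key : ∀ x : ℝ, (∫⁻ y, ({p : ℝ × ℝ | p.1 ∈ S ∧ g p.1 < p.2}).indicator
        (fun p => ENNReal.ofReal (1 / p.2 ^ 2)) (x, y))
        = S.indicator (fun x => ENNReal.ofReal (1 / g x)) x := by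
      intro x
      by_cases hx : x ∈ S
      · rw [indicator_of_mem hx]
        rw [show (fun y => ({p : ℝ × ℝ | p.1 ∈ S ∧ g p.1 < p.2}).indicator
            (fun p => ENNReal.ofReal (1 / p.2 ^ 2)) (x, y))
            = (Ioi (g x)).indicator (fun y => ENNReal.ofReal (1 / y ^ 2)) from ?_]
        · rw [lintegral_indicator measurableSet_Ioi, lintegral_Ioi_inv_sq (hgpos x)]
        · ext y
          by_cases hy : g x < y <;> simp [indicator, hx, hy]
      · rw [indicator_of_notMem hx]
        rw [show (fun y => ({p : ℝ × ℝ | p.1 ∈ S ∧ g p.1 < p.2}).indicator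
            (fun p => ENNReal.ofReal (1 / p.2 ^ 2)) (x, y)) = fun _ => 0 from ?_]
        · simp
        · ext y; simp [indicator, hx]
    simp_rw [key]
    rw [lintegral_indicator hS]
  · exact (Measurable.indicator (by fun_prop) hA).aemeasurable

lemma max_abs_eq {t s x : ℝ} (hst : s ≤ t) :
    max |x - t| |x - s| = |x - (s + t) / 2| + (t - s) / 2 := by
  rcases le_total x ((s + t) / 2) with h | h
  · rw [abs_of_nonpos (by linarith : x - t ≤ 0), abs_of_nonpos (by linarith : x - (s+t)/2 ≤ 0),
      max_eq_left (abs_le.mpr ⟨by linarith, by linarith⟩)]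
    ring
  · rw [abs_of_nonneg (by linarith : 0 ≤ x - s), abs_of_nonneg (by linarith : 0 ≤ x - (s+t)/2),
      max_eq_right (abs_le.mpr ⟨by linarith, by linarith⟩)]
    ring

lemma cont_inv_max {d eps : ℝ} (heps : 0 < eps) :
    Continuous (fun x : ℝ => 1 / max (2 * |x| + d) eps) := by
  apply continuous_const.div
  · fun_prop
  · intro x
    have : eps ≤ max (2 * |x| + d) eps := le_max_right _ _
    positivity

lemma reduce_integral {d eps c r : ℝ} (heps : 0 < eps) (hr : 0 ≤ r) :
    ∫ x in Ioo (c - r) (c + r), 1 / max (2 * |x - c| + d) eps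
      = 2 * ∫ x in (0:ℝ)..r, 1 / max (2 * |x| + d) eps := by
  have hcont := cont_inv_max (d := d) heps
  rw [← integral_Ioc_eq_integral_Ioo, ← intervalIntegral.integral_of_le (by linarith)]
  have h1 := intervalIntegral.integral_comp_sub_right (a := c - r) (b := c + r)
    (fun u : ℝ => 1 / max (2 * |u| + d) eps) c
  rw [h1]
  have e1 : c - r - c = -r := by ring
  have e2 : c + r - c = r := by ring
  rw [e1, e2]
  have hsplit : (∫ x in (-r)..(0:ℝ), 1 / max (2 * |x| + d) eps)
      + (∫ x in (0:ℝ)..r, 1 / max (2 * |x| + d) eps)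
      = ∫ x in (-r)..r, 1 / max (2 * |x| + d) eps :=
    intervalIntegral.integral_add_adjacent_intervals
      (hcont.intervalIntegrable _ _) (hcont.intervalIntegrable _ _)
  have hneg : (∫ x in (-r)..(0:ℝ), 1 / max (2 * |x| + d) eps)
      = ∫ x in (0:ℝ)..r, 1 / max (2 * |x| + d) eps := by
    have := intervalIntegral.integral_comp_neg (a := (0:ℝ)) (b := r)
      (fun u : ℝ => 1 / max (2 * |u| + d) eps)
    simp only [abs_neg, neg_zero] at this
    rw [← this]
  linarith [hsplit, hneg]

lemma integral_case2 {d eps c : ℝ} (heps : 0 < eps) (hed : eps ≤ d) (hd1 : d ≤ 1) :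
    ∫ x in Ioo (c - (1 - d) / 2) (c + (1 - d) / 2), 1 / max (2 * |x - c| + d) eps
      = Real.log (1 / d) := by
  have hd0 : 0 < d := heps.trans_le hed
  rw [reduce_integral heps (by linarith)]
  have hcongr : (∫ x in (0:ℝ)..((1 - d) / 2), 1 / max (2 * |x| + d) eps)
      = ∫ x in (0:ℝ)..((1 - d) / 2), 1 / (2 * x + d) := by
    apply intervalIntegral.integral_congr
    intro x hx
    rw [Set.uIcc_of_le (by linarith)] at hx
    dsimp only
    rw [abs_of_nonneg hx.1, max_eq_left (by linarith [hx.1])]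
  rw [hcongr]
  have hsub := intervalIntegral.integral_comp_mul_add (a := (0:ℝ)) (b := (1 - d) / 2)
    (fun u : ℝ => 1 / u) two_ne_zero d
  rw [hsub]
  have e1 : 2 * (0:ℝ) + d = d := by ring
  have e2 : 2 * ((1 - d) / 2) + d = 1 := by ring
  rw [e1, e2, integral_one_div (by rw [Set.uIcc_of_le (by linarith)]; simp; linarith)]
  rw [smul_eq_mul]
  ring

lemma integral_case1 {d eps c : ℝ} (hd0 : 0 ≤ d) (hde : d < eps) (heps1 : eps ≤ 1) :
    ∫ x in Ioo (c - (1 - d) / 2) (c + (1 - d) / 2), 1 / max (2 * |x - c| + d) eps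
      = 1 - d / eps - Real.log eps := by
  have heps : 0 < eps := hd0.trans_lt hde
  have hu0 : 0 ≤ (eps - d) / 2 := by linarith
  have hur : (eps - d) / 2 ≤ (1 - d) / 2 := by linarith
  rw [reduce_integral heps (by linarith)]
  have hcont := cont_inv_max (d := d) heps
  have hsplit : (∫ x in (0:ℝ)..((eps - d) / 2), 1 / max (2 * |x| + d) eps)
      + (∫ x in ((eps - d) / 2)..((1 - d) / 2), 1 / max (2 * |x| + d) eps)
      = ∫ x in (0:ℝ)..((1 - d) / 2), 1 / max (2 * |x| + d) eps :=
    intervalIntegral.integral_add_adjacent_intervals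
      (hcont.intervalIntegrable _ _) (hcont.intervalIntegrable _ _)
  rw [← hsplit]
  have hA : (∫ x in (0:ℝ)..((eps - d) / 2), 1 / max (2 * |x| + d) eps)
      = (eps - d) / 2 * (1 / eps) := by
    rw [show (∫ x in (0:ℝ)..((eps - d) / 2), 1 / max (2 * |x| + d) eps)
        = ∫ _x in (0:ℝ)..((eps - d) / 2), 1 / eps from ?_]
    · rw [intervalIntegral.integral_const, smul_eq_mul, sub_zero]
    · apply intervalIntegral.integral_congr
      intro x hx
      rw [Set.uIcc_of_le hu0] at hx
      dsimp only
      rw [abs_of_nonneg hx.1, max_eq_right (by linarith [hx.2])]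
  have hB : (∫ x in ((eps - d) / 2)..((1 - d) / 2), 1 / max (2 * |x| + d) eps)
      = 2⁻¹ * Real.log (1 / eps) := by
    have hcongr : (∫ x in ((eps - d) / 2)..((1 - d) / 2), 1 / max (2 * |x| + d) eps)
        = ∫ x in ((eps - d) / 2)..((1 - d) / 2), 1 / (2 * x + d) := by
      apply intervalIntegral.integral_congr
      intro x hx
      rw [Set.uIcc_of_le hur] at hx
      dsimp only
      rw [abs_of_nonneg (by linarith [hx.1, hu0] : (0:ℝ) ≤ x),
        max_eq_left (by linarith [hx.1])]
    rw [hcongr]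
    have hsub := intervalIntegral.integral_comp_mul_add (a := (eps - d) / 2) (b := (1 - d) / 2)
      (fun u : ℝ => 1 / u) two_ne_zero d
    rw [hsub]
    have e1 : 2 * ((eps - d) / 2) + d = eps := by ring
    have e2 : 2 * ((1 - d) / 2) + d = 1 := by ring
    rw [e1, e2, integral_one_div (by rw [Set.uIcc_of_le heps1]; simp; linarith)]
    rw [smul_eq_mul]
  rw [hA, hB]
  rw [Real.log_div one_ne_zero (ne_of_gt heps), Real.log_one]
  field_simp
  ring

lemma cone_inter_eq (m : ℕ) {t s : ℝ} (hst : s ≤ t) :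
    coneSet m t ∩ coneSet m s =
    {p : ℝ × ℝ | p.1 ∈ Ioo ((s + t) / 2 - (1 - (t - s)) / 2) ((s + t) / 2 + (1 - (t - s)) / 2) ∧
      max (2 * |p.1 - (s + t) / 2| + (t - s)) ((2 : ℝ) ^ (-(m : ℤ))) < p.2} := by
  ext ⟨x, y⟩
  simp only [coneSet, Set.mem_inter_iff, Set.mem_setOf_eq, Set.mem_Ioo, max_lt_iff]
  have hmax : max (2 * |x - t|) (2 * |x - s|) = 2 * |x - (s + t) / 2| + (t - s) := by
    rw [← mul_max_of_nonneg _ _ (by norm_num : (0:ℝ) ≤ 2), max_abs_eq hst]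
    ring
  constructor
  · rintro ⟨⟨⟨h1, h2⟩, h3⟩, ⟨h4, _⟩, h5⟩
    rw [abs_lt] at h3 h5
    refine ⟨⟨by linarith [h3.1, h5.1], by linarith [h3.2, h5.2]⟩, ?_, h2⟩
    calc 2 * |x - (s + t) / 2| + (t - s) = max (2 * |x - t|) (2 * |x - s|) := hmax.symm
      _ < y := max_lt h1 h4
  · rintro ⟨⟨hx1, hx2⟩, hy, he⟩
    have hlt : max (2 * |x - t|) (2 * |x - s|) < y := by rw [hmax]; exact hy
    rw [max_lt_iff] at hlt
    exact ⟨⟨⟨hlt.1, he⟩, abs_lt.mpr ⟨by linarith, by linarith⟩⟩,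
      ⟨hlt.2, he⟩, abs_lt.mpr ⟨by linarith, by linarith⟩⟩

lemma cone_measure_eq (m : ℕ) {t s : ℝ} (hst : s ≤ t) :
    hypMeasure (coneSet m t ∩ coneSet m s) =
      ENNReal.ofReal (∫ x in
        Ioo ((s + t) / 2 - (1 - (t - s)) / 2) ((s + t) / 2 + (1 - (t - s)) / 2),
        1 / max (2 * |x - (s + t) / 2| + (t - s)) ((2 : ℝ) ^ (-(m : ℤ)))) := by
  set eps : ℝ := (2 : ℝ) ^ (-(m : ℤ)) with heps_def
  have heps : 0 < eps := by positivity
  set g : ℝ → ℝ := fun x => max (2 * |x - (s + t) / 2| + (t - s)) eps with hg_def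
  have hgc : Continuous g := by fun_prop
  have hgpos : ∀ x, 0 < g x := fun x => lt_of_lt_of_le heps (le_max_right _ _)
  rw [cone_inter_eq m hst, hyp_slab measurableSet_Ioo hgc.measurable hgpos]
  have hint : IntegrableOn (fun x => 1 / g x) (Ioo ((s + t) / 2 - (1 - (t - s)) / 2)
      ((s + t) / 2 + (1 - (t - s)) / 2)) := by
    have hc : Continuous (fun x => 1 / g x) := by
      apply continuous_const.div hgc
      intro x; exact ne_of_gt (hgpos x)
    exact (hc.integrableOn_Icc).mono_set Ioo_subset_Icc_self
  rw [← ofReal_integral_eq_lintegral_ofReal hint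
    (Filter.Eventually.of_forall fun x => by positivity)]

lemma cone_aux (m : ℕ) (t s : ℝ) (hst : s ≤ t) (hs0 : 0 ≤ s) (ht1 : t ≤ 1) :
    (|t - s| < (2 : ℝ) ^ (-(m : ℤ)) →
      hypMeasure (coneSet m t ∩ coneSet m s) =
        ENNReal.ofReal ((m : ℝ) * Real.log 2 + 1 - 2 ^ (m : ℕ) * |t - s|)) ∧
    ((2 : ℝ) ^ (-(m : ℤ)) ≤ |t - s| → |t - s| ≤ 1 →
      hypMeasure (coneSet m t ∩ coneSet m s) = ENNReal.ofReal (Real.log (1 / |t - s|))) := by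
  have hd0 : 0 ≤ t - s := by linarith
  have habs : |t - s| = t - s := abs_of_nonneg hd0
  have heps : (0:ℝ) < (2 : ℝ) ^ (-(m : ℤ)) := by positivity
  have heps_inv : ((2 : ℝ) ^ (-(m : ℤ)))⁻¹ = 2 ^ (m : ℕ) := by
    rw [← zpow_neg, neg_neg, zpow_natCast]
  have heps1 : (2 : ℝ) ^ (-(m : ℤ)) ≤ 1 := by
    rw [show ((2:ℝ) ^ (-(m : ℤ))) = ((2:ℝ) ^ (m : ℕ))⁻¹ by rw [← heps_inv, inv_inv]]
    exact inv_le_one_of_one_le₀ (one_le_pow₀ one_le_two)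
  rw [habs, cone_measure_eq m hst]
  constructor
  · intro hlt
    rw [integral_case1 hd0 hlt heps1]
    congr 1
    rw [Real.log_zpow, div_eq_mul_inv, heps_inv]
    push_cast
    ring
  · intro hge hle
    rw [integral_case2 heps hge hle]

end Aux

theorem hypMeasure_cone_inter (m : ℕ) (t s : ℝ)
    (ht : t ∈ Set.Icc (0 : ℝ) 1) (hs : s ∈ Set.Icc (0 : ℝ) 1) :
    (|t - s| < (2 : ℝ) ^ (-(m : ℤ)) →
      hypMeasure (coneSet m t ∩ coneSet m s) =
        ENNReal.ofReal ((m : ℝ) * Real.log 2 + 1 - 2 ^ (m : ℕ) * |t - s|)) ∧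
    ((2 : ℝ) ^ (-(m : ℤ)) ≤ |t - s| → |t - s| ≤ 1 →
      hypMeasure (coneSet m t ∩ coneSet m s) = ENNReal.ofReal (Real.log (1 / |t - s|))) := by
  rcases le_total s t with h | h
  · exact cone_aux m t s h hs.1 ht.2
  · rw [Set.inter_comm, abs_sub_comm]
    exact cone_aux m s t h ht.1 hs.2
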